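/- UCLOSR monotonicity of the uncorrelated-input statistical strength: for every no-signaling behavior P in the (r,s) Bell scenario and every UCLOSR wiring W from the (r,s) scenario to the (r_f,s_f) scenario, S_uc(W(P)) ≤ S_uc(P). -/

import Mathlib

open scoped ENNReal
open Finset

/-- A probability distribution on a finite type. -/
def IsDist {Z : Type*} [Fintype Z] (p : Z → ℝ) : Prop :=
  (∀ z, 0 ≤ p z) ∧ ∑ z, p z = 1

/-- Relative entropy (Kullback-Leibler divergence) of finitely supported
distributions, valued in `[0,∞]`, with the conventions `0·log(0/t) = 0` and
`S(p‖q) = ∞` whenever `q` vanishes at a point where `p` does not. -/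
noncomputable def relEnt {Z : Type*} [Fintype Z] (p q : Z → ℝ) : ℝ≥0∞ :=
  if ∃ z, p z ≠ 0 ∧ q z = 0 then ⊤
  else ENNReal.ofReal (∑ z, p z * Real.log (p z / q z))

/-- A behavior in the (r,s) Bell scenario: `P a b x y = P(a,b|x,y)`. -/
def IsBehavior {r s : ℕ} (P : Fin r → Fin r → Fin s → Fin s → ℝ) : Prop :=
  (∀ a b x y, 0 ≤ P a b x y) ∧ ∀ x y, ∑ a, ∑ b, P a b x y = 1

/-- The no-signaling conditions. -/
def NoSignaling {r s : ℕ} (P : Fin r → Fin r → Fin s → Fin s → ℝ) : Prop :=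
  (∀ b x x' y, ∑ a, P a b x y = ∑ a, P a b x' y) ∧
  (∀ a x y y', ∑ b, P a b x y = ∑ b, P a b x y')

/-- Local (local-hidden-variable) behavior. -/
def IsLocal {r s : ℕ} (P : Fin r → Fin r → Fin s → Fin s → ℝ) : Prop :=
  ∃ (n : ℕ) (q : Fin n → ℝ) (PA : Fin r → Fin s → Fin n → ℝ)
    (PB : Fin r → Fin s → Fin n → ℝ),
    IsDist q ∧
    (∀ x l, (∀ a, 0 ≤ PA a x l) ∧ ∑ a, PA a x l = 1) ∧
    (∀ y l, (∀ b, 0 ≤ PB b y l) ∧ ∑ b, PB b y l = 1) ∧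
    (∀ a b x y, P a b x y = ∑ l, q l * PA a x l * PB b y l)

/-- Output distribution `P(·,·|x,y)` of a behavior for fixed inputs. -/
def outDist {r s : ℕ} (P : Fin r → Fin r → Fin s → Fin s → ℝ) (x y : Fin s) :
    Fin r × Fin r → ℝ := fun ab => P ab.1 ab.2 x y

/-- The behavior relative entropy `S_b(P‖P')`: the maximum over input pairs
`(x,y)` of the relative entropy of the output distributions. -/
noncomputable def Sb {r s : ℕ} (P P' : Fin r → Fin r → Fin s → Fin s → ℝ) : ℝ≥0∞ :=
  Finset.univ.sup fun xy : Fin s × Fin s =>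
    relEnt (outDist P xy.1 xy.2) (outDist P' xy.1 xy.2)

/-- A global wiring from the (r,s) scenario to the (rf,sf) scenario. -/
structure GlobalWiring (r s rf sf : ℕ) where
  I : Fin s → Fin s → Fin sf → Fin sf → ℝ          -- I x y χ ψ  =  I(x,y|χ,ψ)
  O : Fin rf → Fin rf → Fin r → Fin r → Fin s → Fin s → Fin sf → Fin sf → ℝ
    -- O α β a b x y χ ψ  =  O(α,β|a,b,x,y,χ,ψ)
  I_nonneg : ∀ x y χ ψ, 0 ≤ I x y χ ψ
  I_sum : ∀ χ ψ, ∑ x, ∑ y, I x y χ ψ = 1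
  O_nonneg : ∀ α β a b x y χ ψ, 0 ≤ O α β a b x y χ ψ
  O_sum : ∀ a b x y χ ψ, ∑ α, ∑ β, O α β a b x y χ ψ = 1

/-- Action of a global wiring on a behavior. -/
noncomputable def GlobalWiring.apply {r s rf sf : ℕ} (W : GlobalWiring r s rf sf)
    (P : Fin r → Fin r → Fin s → Fin s → ℝ) :
    Fin rf → Fin rf → Fin sf → Fin sf → ℝ :=
  fun α β χ ψ => ∑ a, ∑ b, ∑ x, ∑ y,
    W.O α β a b x y χ ψ * P a b x y * W.I x y χ ψ

/-- LOSR wiring: a global wiring whose input and output boxes are local. -/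
def GlobalWiring.IsLOSR {r s rf sf : ℕ} (W : GlobalWiring r s rf sf) : Prop :=
  ∃ (n m : ℕ) (q : Fin n → ℝ) (q' : Fin m → ℝ)
    (IA : Fin s → Fin sf → Fin n → ℝ) (IB : Fin s → Fin sf → Fin n → ℝ)
    (OA : Fin rf → Fin r → Fin s → Fin sf → Fin m → ℝ)
    (OB : Fin rf → Fin r → Fin s → Fin sf → Fin m → ℝ),
    IsDist q ∧ IsDist q' ∧
    (∀ χ l, (∀ x, 0 ≤ IA x χ l) ∧ ∑ x, IA x χ l = 1) ∧
    (∀ ψ l, (∀ y, 0 ≤ IB y ψ l) ∧ ∑ y, IB y ψ l = 1) ∧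
    (∀ a x χ u, (∀ α, 0 ≤ OA α a x χ u) ∧ ∑ α, OA α a x χ u = 1) ∧
    (∀ b y ψ u, (∀ β, 0 ≤ OB β b y ψ u) ∧ ∑ β, OB β b y ψ u = 1) ∧
    (∀ x y χ ψ, W.I x y χ ψ = ∑ l, q l * IA x χ l * IB y ψ l) ∧
    (∀ α β a b x y χ ψ,
      W.O α β a b x y χ ψ = ∑ u, q' u * OA α a x χ u * OB β b y ψ u)

/-- UCLOSR wiring: a global wiring whose input and output boxes are products. -/
def GlobalWiring.IsUCLOSR {r s rf sf : ℕ} (W : GlobalWiring r s rf sf) : Prop :=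
  ∃ (IA : Fin s → Fin sf → ℝ) (IB : Fin s → Fin sf → ℝ)
    (OA : Fin rf → Fin r → Fin s → Fin sf → ℝ)
    (OB : Fin rf → Fin r → Fin s → Fin sf → ℝ),
    (∀ χ, (∀ x, 0 ≤ IA x χ) ∧ ∑ x, IA x χ = 1) ∧
    (∀ ψ, (∀ y, 0 ≤ IB y ψ) ∧ ∑ y, IB y ψ = 1) ∧
    (∀ a x χ, (∀ α, 0 ≤ OA α a x χ) ∧ ∑ α, OA α a x χ = 1) ∧
    (∀ b y ψ, (∀ β, 0 ≤ OB β b y ψ) ∧ ∑ β, OB β b y ψ = 1) ∧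
    (∀ x y χ ψ, W.I x y χ ψ = IA x χ * IB y ψ) ∧
    (∀ α β a b x y χ ψ, W.O α β a b x y χ ψ = OA α a x χ * OB β b y ψ)

/-- The relative entropy of nonlocality `S_nl`. -/
noncomputable def Snl {r s : ℕ} (P : Fin r → Fin r → Fin s → Fin s → ℝ) : ℝ≥0∞ :=
  ⨅ (Q : Fin r → Fin r → Fin s → Fin s → ℝ) (_ : IsBehavior Q ∧ IsLocal Q), Sb P Q

/-- The uniform-input statistical strength `S_u`. -/
noncomputable def Su {r s : ℕ} (P : Fin r → Fin r → Fin s → Fin s → ℝ) : ℝ≥0∞ :=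
  ⨅ (Q : Fin r → Fin r → Fin s → Fin s → ℝ) (_ : IsBehavior Q ∧ IsLocal Q),
    ((s : ℝ≥0∞) ^ 2)⁻¹ * ∑ x, ∑ y, relEnt (outDist P x y) (outDist Q x y)

/-- The uncorrelated-input statistical strength `S_uc`. -/
noncomputable def Suc {r s : ℕ} (P : Fin r → Fin r → Fin s → Fin s → ℝ) : ℝ≥0∞ :=
  ⨆ (DA : Fin s → ℝ) (DB : Fin s → ℝ) (_ : IsDist DA ∧ IsDist DB),
    ⨅ (Q : Fin r → Fin r → Fin s → Fin s → ℝ) (_ : IsBehavior Q ∧ IsLocal Q),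
      ∑ x, ∑ y, ENNReal.ofReal (DA x * DB y) *
        relEnt (outDist P x y) (outDist Q x y)

lemma ofReal_sum_le {ι : Type*} (s : Finset ι) (f : ι → ℝ) :
    ENNReal.ofReal (∑ i ∈ s, f i) ≤ ∑ i ∈ s, ENNReal.ofReal (f i) := by
  classical
  induction s using Finset.induction with
  | empty => simp
  | @insert a s h ih =>
    rw [Finset.sum_insert h, Finset.sum_insert h]
    exact (ENNReal.ofReal_add_le).trans (add_le_add_right ih _)

/-- Log-sum inequality. -/
lemma log_sum_ineq {ι : Type*} [Fintype ι] (a b : ι → ℝ)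
    (ha : ∀ j, 0 ≤ a j) (hb : ∀ j, 0 ≤ b j) (hab : ∀ j, b j = 0 → a j = 0) :
    (∑ j, a j) * Real.log ((∑ j, a j) / (∑ j, b j)) ≤
      ∑ j, a j * Real.log (a j / b j) := by
  set A := ∑ j, a j with hA
  set B := ∑ j, b j with hB
  rcases eq_or_lt_of_le (Finset.sum_nonneg fun j _ => ha j) with h0 | hApos
  · -- A = 0, all a j = 0
    have hz : ∀ j ∈ Finset.univ, a j = 0 := by
      intro j _
      exact le_antisymm (by
        have := (Finset.sum_eq_zero_iff_of_nonneg (fun j _ => ha j)).mp h0.symm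
        exact le_of_eq (this j (mem_univ j))) (ha j)
    have hA0 : A = 0 := by rw [hA, ← h0]
    rw [hA0]
    simp only [zero_mul]
    apply Finset.sum_nonneg
    intro j _
    rw [hz j (mem_univ j)]
    simp
  · -- A > 0
    have hBpos : 0 < B := by
      obtain ⟨j0, hj0⟩ : ∃ j, 0 < a j := by
        by_contra hcon
        push_neg at hcon
        have : A ≤ 0 := Finset.sum_nonpos fun j _ => hcon j
        linarith
      have hbj : 0 < b j0 := lt_of_le_of_ne (hb j0) fun h => by
        have := hab j0 h.symm; linarith [hj0, this]
      exact lt_of_lt_of_le hbj (Finset.single_le_sum (fun j _ => hb j) (mem_univ j0))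
    have key : ∀ j, a j - b j * (A / B) ≤ a j * (Real.log (a j / b j) - Real.log (A / B)) := by
      intro j
      rcases eq_or_lt_of_le (ha j) with haj | haj
      · rw [← haj]
        simp only [zero_mul, zero_sub, neg_nonpos]
        have hAB : 0 ≤ A / B := by positivity
        exact mul_nonneg (hb j) hAB
      · have hbj : 0 < b j := lt_of_le_of_ne (hb j) fun h => by
          have := hab j h.symm; linarith
        have hx : (0:ℝ) < (b j * A) / (a j * B) := by positivity
        have hlog := Real.log_le_sub_one_of_pos hx
        have hrw : Real.log ((b j * A) / (a j * B)) =
            -(Real.log (a j / b j) - Real.log (A / B)) := by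
          rw [Real.log_div (by positivity) (by positivity),
              Real.log_mul (by positivity) (by positivity),
              Real.log_mul (by positivity) (by positivity),
              Real.log_div (by positivity) (by positivity),
              Real.log_div (by positivity) (by positivity)]
          ring
        rw [hrw] at hlog
        -- hlog : -(L) ≤ (b j * A)/(a j * B) - 1
        have := mul_le_mul_of_nonneg_left hlog (le_of_lt haj)
        -- a j * (-(L)) ≤ a j * ((b j * A)/(a j * B) - 1)
        have hsimp : a j * ((b j * A) / (a j * B) - 1) = b j * (A / B) - a j := by
          field_simp
        nlinarith [this]
    have hsum := Finset.sum_le_sum fun j (_ : j ∈ Finset.univ) => key j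
    have hleft : ∑ j, (a j - b j * (A / B)) = 0 := by
      rw [Finset.sum_sub_distrib, ← Finset.sum_mul, ← hB]
      field_simp
      exact sub_eq_zero.mpr hA.symm
    have hright : ∑ j, a j * (Real.log (a j / b j) - Real.log (A / B)) =
        (∑ j, a j * Real.log (a j / b j)) - A * Real.log (A / B) := by
      simp only [mul_sub]
      rw [Finset.sum_sub_distrib, ← Finset.sum_mul, ← hA]
    rw [hleft, hright] at hsum
    linarith

/-- Generalized data processing inequality for `relEnt`. -/
lemma gdp {ι Z Z' : Type*} [Fintype ι] [Fintype Z] [Fintype Z']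
    (w : ι → ℝ) (hw : ∀ i, 0 ≤ w i)
    (p q : ι → Z → ℝ) (hp : ∀ i z, 0 ≤ p i z) (hq : ∀ i z, 0 ≤ q i z)
    (T : ι → Z' → Z → ℝ) (hT : ∀ i z' z, 0 ≤ T i z' z)
    (hT1 : ∀ i z, ∑ z', T i z' z = 1) :
    relEnt (fun z' => ∑ i, ∑ z, w i * T i z' z * p i z)
           (fun z' => ∑ i, ∑ z, w i * T i z' z * q i z)
      ≤ ∑ i, ENNReal.ofReal (w i) * relEnt (p i) (q i) := by
  classical
  by_cases hinf : ∃ i, w i ≠ 0 ∧ ∃ z, p i z ≠ 0 ∧ q i z = 0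
  · obtain ⟨i0, hwi0, hz⟩ := hinf
    have h1 : relEnt (p i0) (q i0) = ⊤ := by rw [relEnt, if_pos hz]
    have h2 : ENNReal.ofReal (w i0) * relEnt (p i0) (q i0) = ⊤ := by
      rw [h1, ENNReal.mul_top]
      simp only [ne_eq, ENNReal.ofReal_eq_zero, not_le]
      exact lt_of_le_of_ne (hw i0) (Ne.symm hwi0)
    have : (∑ i, ENNReal.ofReal (w i) * relEnt (p i) (q i)) = ⊤ :=
      ENNReal.sum_eq_top.mpr ⟨i0, mem_univ i0, h2⟩
    rw [this]; exact le_top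
  · push_neg at hinf
    -- support condition: w i ≠ 0 → (p i z ≠ 0 → q i z ≠ 0)
    set p' : Z' → ℝ := fun z' => ∑ i, ∑ z, w i * T i z' z * p i z with hp'
    set q' : Z' → ℝ := fun z' => ∑ i, ∑ z, w i * T i z' z * q i z with hq'
    have hsupp : ¬∃ z', p' z' ≠ 0 ∧ q' z' = 0 := by
      rintro ⟨z', hpz', hqz'⟩
      apply hpz'
      have hqterms : ∀ i z, w i * T i z' z * q i z = 0 := by
        have := (Finset.sum_eq_zero_iff_of_nonneg
          (fun i (_ : i ∈ Finset.univ) => Finset.sum_nonneg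
            (fun z _ => mul_nonneg (mul_nonneg (hw i) (hT i z' z)) (hq i z)))).mp hqz'
        intro i z
        have hzero := this i (mem_univ i)
        exact (Finset.sum_eq_zero_iff_of_nonneg
          (fun z (_ : z ∈ Finset.univ) =>
            mul_nonneg (mul_nonneg (hw i) (hT i z' z)) (hq i z))).mp hzero z (mem_univ z)
      apply Finset.sum_eq_zero
      intro i _
      apply Finset.sum_eq_zero
      intro z _
      by_cases hwi : w i = 0
      · rw [hwi]; ring
      by_cases hTi : T i z' z = 0
      · rw [hTi]; ring
      by_cases hpi : p i z = 0
      · rw [hpi]; ring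
      · exfalso
        have hqi := hinf i hwi z hpi
        have := hqterms i z
        rcases mul_eq_zero.mp this with h | h
        · rcases mul_eq_zero.mp h with h' | h' <;> [exact hwi h'; exact hTi h']
        · exact hqi h
    rw [relEnt, if_neg hsupp]
    -- real core inequality
    have core : (∑ z', p' z' * Real.log (p' z' / q' z')) ≤
        ∑ i, w i * ∑ z, p i z * Real.log (p i z / q i z) := by
      have step1 : ∀ z', p' z' * Real.log (p' z' / q' z') ≤
          ∑ j : ι × Z, (w j.1 * T j.1 z' j.2 * p j.1 j.2) *
            Real.log (p j.1 j.2 / q j.1 j.2) := by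
        intro z'
        have hls := log_sum_ineq (ι := ι × Z)
          (fun j => w j.1 * T j.1 z' j.2 * p j.1 j.2)
          (fun j => w j.1 * T j.1 z' j.2 * q j.1 j.2)
          (fun j => mul_nonneg (mul_nonneg (hw j.1) (hT j.1 z' j.2)) (hp j.1 j.2))
          (fun j => mul_nonneg (mul_nonneg (hw j.1) (hT j.1 z' j.2)) (hq j.1 j.2))
          (by
            rintro ⟨i, z⟩ hb0
            by_contra ha0
            have hwi : w i ≠ 0 := fun h => ha0 (by simp [h])
            have hTi : T i z' z ≠ 0 := fun h => ha0 (by simp [h])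
            have hpi : p i z ≠ 0 := fun h => ha0 (by simp [h])
            have hqi := hinf i hwi z hpi
            rcases mul_eq_zero.mp hb0 with h | h
            · rcases mul_eq_zero.mp h with h' | h' <;> [exact hwi h'; exact hTi h']
            · exact hqi h)
        have hsums : (∑ j : ι × Z, w j.1 * T j.1 z' j.2 * p j.1 j.2) = p' z' ∧
            (∑ j : ι × Z, w j.1 * T j.1 z' j.2 * q j.1 j.2) = q' z' := by
          constructor <;> rw [Fintype.sum_prod_type]
        rw [hsums.1, hsums.2] at hls
        refine hls.trans (le_of_eq (Finset.sum_congr rfl ?_))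
        rintro ⟨i, z⟩ _
        show w i * T i z' z * p i z *
            Real.log (w i * T i z' z * p i z / (w i * T i z' z * q i z)) =
          w i * T i z' z * p i z * Real.log (p i z / q i z)
        by_cases ha0 : w i * T i z' z * p i z = 0
        · rw [ha0]
          simp only [zero_mul]
        · have hwi : w i ≠ 0 := fun h => ha0 (by simp [h])
          have hTi : T i z' z ≠ 0 := fun h => ha0 (by simp [h])
          have hpi : p i z ≠ 0 := fun h => ha0 (by simp [h])
          have hqi := hinf i hwi z hpi
          congr 2
          rw [mul_div_mul_left _ _ (mul_ne_zero hwi hTi)]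
      calc (∑ z', p' z' * Real.log (p' z' / q' z'))
          ≤ ∑ z', ∑ j : ι × Z, (w j.1 * T j.1 z' j.2 * p j.1 j.2) *
              Real.log (p j.1 j.2 / q j.1 j.2) :=
            Finset.sum_le_sum fun z' _ => step1 z'
        _ = ∑ j : ι × Z, ∑ z', (w j.1 * T j.1 z' j.2 * p j.1 j.2) *
              Real.log (p j.1 j.2 / q j.1 j.2) := Finset.sum_comm
        _ = ∑ i, w i * ∑ z, p i z * Real.log (p i z / q i z) := by
            rw [Fintype.sum_prod_type]
            refine Finset.sum_congr rfl fun i _ => ?_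
            rw [Finset.mul_sum]
            refine Finset.sum_congr rfl fun z _ => ?_
            rw [← Finset.sum_mul, ← Finset.sum_mul]
            rw [show (∑ z', w i * T i z' z) = w i * ∑ z', T i z' z by
              rw [Finset.mul_sum]]
            rw [hT1 i z]
            ring
    refine (ENNReal.ofReal_le_ofReal core).trans ?_
    refine (ofReal_sum_le _ _).trans ?_
    refine Finset.sum_le_sum fun i _ => ?_
    by_cases hi : ∃ z, p i z ≠ 0 ∧ q i z = 0
    · have hwi : w i = 0 := by
        by_contra hwi
        obtain ⟨z, hz1, hz2⟩ := hi
        exact (hinf i hwi z hz1) hz2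
      rw [hwi]
      simp
    · rw [relEnt, if_neg hi, ← ENNReal.ofReal_mul (hw i)]

lemma sum_comm3 {A B C M : Type*} [Fintype A] [Fintype B] [Fintype C] [AddCommMonoid M]
    (f : A → B → C → M) :
    ∑ a, ∑ b, ∑ c, f a b c = ∑ b, ∑ c, ∑ a, f a b c := by
  rw [Finset.sum_comm]
  exact Finset.sum_congr rfl fun b _ => Finset.sum_comm

lemma applyEq {r s rf sf : ℕ} (W : GlobalWiring r s rf sf)
    (R : Fin r → Fin r → Fin s → Fin s → ℝ) (α β : Fin rf) (χ ψ : Fin sf) :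
    W.apply R α β χ ψ = ∑ ab : Fin r × Fin r, ∑ xy : Fin s × Fin s,
      W.O α β ab.1 ab.2 xy.1 xy.2 χ ψ * R ab.1 ab.2 xy.1 xy.2 *
        W.I xy.1 xy.2 χ ψ := by
  simp [GlobalWiring.apply, Fintype.sum_prod_type]

lemma apply_isBehavior {r s rf sf : ℕ} (W : GlobalWiring r s rf sf)
    (Q : Fin r → Fin r → Fin s → Fin s → ℝ) (hQ : IsBehavior Q) :
    IsBehavior (W.apply Q) := by
  constructor
  · intro α β χ ψ
    apply Finset.sum_nonneg; intro a _
    apply Finset.sum_nonneg; intro b _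
    apply Finset.sum_nonneg; intro x _
    apply Finset.sum_nonneg; intro y _
    exact mul_nonneg (mul_nonneg (W.O_nonneg _ _ _ _ _ _ _ _) (hQ.1 _ _ _ _))
      (W.I_nonneg _ _ _ _)
  · intro χ ψ
    calc ∑ α, ∑ β, W.apply Q α β χ ψ
        = ∑ α, ∑ β, ∑ ab : Fin r × Fin r, ∑ xy : Fin s × Fin s,
            W.O α β ab.1 ab.2 xy.1 xy.2 χ ψ * Q ab.1 ab.2 xy.1 xy.2 *
              W.I xy.1 xy.2 χ ψ := by
          exact Finset.sum_congr rfl fun α _ => Finset.sum_congr rfl fun β _ =>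
            applyEq W Q α β χ ψ
      _ = ∑ β, ∑ ab : Fin r × Fin r, ∑ α, ∑ xy : Fin s × Fin s,
            W.O α β ab.1 ab.2 xy.1 xy.2 χ ψ * Q ab.1 ab.2 xy.1 xy.2 *
              W.I xy.1 xy.2 χ ψ := sum_comm3 _
      _ = ∑ β, ∑ ab : Fin r × Fin r, ∑ xy : Fin s × Fin s, ∑ α,
            W.O α β ab.1 ab.2 xy.1 xy.2 χ ψ * Q ab.1 ab.2 xy.1 xy.2 *
              W.I xy.1 xy.2 χ ψ :=
          Finset.sum_congr rfl fun β _ => Finset.sum_congr rfl fun ab _ =>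
            Finset.sum_comm
      _ = ∑ ab : Fin r × Fin r, ∑ xy : Fin s × Fin s, ∑ β, ∑ α,
            W.O α β ab.1 ab.2 xy.1 xy.2 χ ψ * Q ab.1 ab.2 xy.1 xy.2 *
              W.I xy.1 xy.2 χ ψ := sum_comm3 _
      _ = ∑ ab : Fin r × Fin r, ∑ xy : Fin s × Fin s,
            Q ab.1 ab.2 xy.1 xy.2 * W.I xy.1 xy.2 χ ψ := by
          refine Finset.sum_congr rfl fun ab _ => Finset.sum_congr rfl fun xy _ => ?_
          simp only [← Finset.sum_mul]
          rw [Finset.sum_comm, W.O_sum, one_mul]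
      _ = ∑ xy : Fin s × Fin s,
            (∑ ab : Fin r × Fin r, Q ab.1 ab.2 xy.1 xy.2) * W.I xy.1 xy.2 χ ψ := by
          rw [Finset.sum_comm]
          exact Finset.sum_congr rfl fun xy _ => (Finset.sum_mul _ _ _).symm
      _ = ∑ xy : Fin s × Fin s, W.I xy.1 xy.2 χ ψ := by
          refine Finset.sum_congr rfl fun xy _ => ?_
          rw [Fintype.sum_prod_type, hQ.2 xy.1 xy.2, one_mul]
      _ = 1 := by rw [Fintype.sum_prod_type, W.I_sum]

lemma apply_isLocal {r s rf sf : ℕ} (W : GlobalWiring r s rf sf)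
    (IA : Fin s → Fin sf → ℝ) (IB : Fin s → Fin sf → ℝ)
    (OA : Fin rf → Fin r → Fin s → Fin sf → ℝ)
    (OB : Fin rf → Fin r → Fin s → Fin sf → ℝ)
    (hIA : ∀ χ, (∀ x, 0 ≤ IA x χ) ∧ ∑ x, IA x χ = 1)
    (hIB : ∀ ψ, (∀ y, 0 ≤ IB y ψ) ∧ ∑ y, IB y ψ = 1)
    (hOA : ∀ a x χ, (∀ α, 0 ≤ OA α a x χ) ∧ ∑ α, OA α a x χ = 1)
    (hOB : ∀ b y ψ, (∀ β, 0 ≤ OB β b y ψ) ∧ ∑ β, OB β b y ψ = 1)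
    (hI : ∀ x y χ ψ, W.I x y χ ψ = IA x χ * IB y ψ)
    (hO : ∀ α β a b x y χ ψ, W.O α β a b x y χ ψ = OA α a x χ * OB β b y ψ)
    (Q : Fin r → Fin r → Fin s → Fin s → ℝ) (hQ : IsLocal Q) :
    IsLocal (W.apply Q) := by
  obtain ⟨n, qd, QA, QB, hqd, hQA, hQB, hQeq⟩ := hQ
  refine ⟨n, qd,
    fun α χ l => ∑ x, ∑ a, IA x χ * QA a x l * OA α a x χ,
    fun β ψ l => ∑ y, ∑ b, IB y ψ * QB b y l * OB β b y ψ,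
    hqd, ?_, ?_, ?_⟩
  · intro χ l
    constructor
    · intro α
      apply Finset.sum_nonneg; intro x _
      apply Finset.sum_nonneg; intro a _
      exact mul_nonneg (mul_nonneg ((hIA χ).1 x) ((hQA x l).1 a)) ((hOA a x χ).1 α)
    · calc ∑ α, ∑ x, ∑ a, IA x χ * QA a x l * OA α a x χ
          = ∑ x, ∑ a, ∑ α, IA x χ * QA a x l * OA α a x χ := sum_comm3 _
        _ = ∑ x, ∑ a, IA x χ * QA a x l := by
            refine Finset.sum_congr rfl fun x _ => Finset.sum_congr rfl fun a _ => ?_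
            rw [← Finset.mul_sum, (hOA a x χ).2, mul_one]
        _ = ∑ x, IA x χ := by
            refine Finset.sum_congr rfl fun x _ => ?_
            rw [← Finset.mul_sum, (hQA x l).2, mul_one]
        _ = 1 := (hIA χ).2
  · intro ψ l
    constructor
    · intro β
      apply Finset.sum_nonneg; intro y _
      apply Finset.sum_nonneg; intro b _
      exact mul_nonneg (mul_nonneg ((hIB ψ).1 y) ((hQB y l).1 b)) ((hOB b y ψ).1 β)
    · calc ∑ β, ∑ y, ∑ b, IB y ψ * QB b y l * OB β b y ψ
          = ∑ y, ∑ b, ∑ β, IB y ψ * QB b y l * OB β b y ψ := sum_comm3 _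
        _ = ∑ y, ∑ b, IB y ψ * QB b y l := by
            refine Finset.sum_congr rfl fun y _ => Finset.sum_congr rfl fun b _ => ?_
            rw [← Finset.mul_sum, (hOB b y ψ).2, mul_one]
        _ = ∑ y, IB y ψ := by
            refine Finset.sum_congr rfl fun y _ => ?_
            rw [← Finset.mul_sum, (hQB y l).2, mul_one]
        _ = 1 := (hIB ψ).2
  · intro α β χ ψ
    calc W.apply Q α β χ ψ
        = ∑ ab : Fin r × Fin r, ∑ xy : Fin s × Fin s,
            W.O α β ab.1 ab.2 xy.1 xy.2 χ ψ * Q ab.1 ab.2 xy.1 xy.2 *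
              W.I xy.1 xy.2 χ ψ := applyEq W Q α β χ ψ
      _ = ∑ ab : Fin r × Fin r, ∑ xy : Fin s × Fin s, ∑ l,
            qd l * ((IA xy.1 χ * QA ab.1 xy.1 l * OA α ab.1 xy.1 χ) *
              (IB xy.2 ψ * QB ab.2 xy.2 l * OB β ab.2 xy.2 ψ)) := by
          refine Finset.sum_congr rfl fun ab _ => Finset.sum_congr rfl fun xy _ => ?_
          rw [hO, hI, hQeq]
          simp only [Finset.mul_sum, Finset.sum_mul]
          exact Finset.sum_congr rfl fun l _ => by ring
      _ = ∑ l, ∑ ab : Fin r × Fin r, ∑ xy : Fin s × Fin s,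
            qd l * ((IA xy.1 χ * QA ab.1 xy.1 l * OA α ab.1 xy.1 χ) *
              (IB xy.2 ψ * QB ab.2 xy.2 l * OB β ab.2 xy.2 ψ)) := (sum_comm3 _).symm
      _ = ∑ l, qd l * ((∑ x, ∑ a, IA x χ * QA a x l * OA α a x χ) *
            (∑ y, ∑ b, IB y ψ * QB b y l * OB β b y ψ)) := by
          refine Finset.sum_congr rfl fun l _ => ?_
          simp only [← Finset.mul_sum]
          congr 1
          calc ∑ ab : Fin r × Fin r, ∑ xy : Fin s × Fin s,
                (IA xy.1 χ * QA ab.1 xy.1 l * OA α ab.1 xy.1 χ) *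
                  (IB xy.2 ψ * QB ab.2 xy.2 l * OB β ab.2 xy.2 ψ)
              = ∑ a, ∑ b, ∑ x, ∑ y,
                (IA x χ * QA a x l * OA α a x χ) *
                  (IB y ψ * QB b y l * OB β b y ψ) := by
                simp [Fintype.sum_prod_type]
            _ = ∑ a, ∑ b, (∑ x, IA x χ * QA a x l * OA α a x χ) *
                  (∑ y, IB y ψ * QB b y l * OB β b y ψ) := by
                refine Finset.sum_congr rfl fun a _ => Finset.sum_congr rfl fun b _ => ?_
                rw [Fintype.sum_mul_sum]
            _ = (∑ a, ∑ x, IA x χ * QA a x l * OA α a x χ) *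
                  (∑ b, ∑ y, IB y ψ * QB b y l * OB β b y ψ) := by
                rw [Fintype.sum_mul_sum]
            _ = (∑ x, ∑ a, IA x χ * QA a x l * OA α a x χ) *
                  (∑ y, ∑ b, IB y ψ * QB b y l * OB β b y ψ) := by
                rw [Finset.sum_comm (f := fun a x => IA x χ * QA a x l * OA α a x χ)]
                rw [Finset.sum_comm (f := fun b y => IB y ψ * QB b y l * OB β b y ψ)]
      _ = ∑ l, qd l * (∑ x, ∑ a, IA x χ * QA a x l * OA α a x χ) *
            (∑ y, ∑ b, IB y ψ * QB b y l * OB β b y ψ) := by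
          exact Finset.sum_congr rfl fun l _ => by ring

set_option maxHeartbeats 1600000 in
/-- UCLOSR monotonicity of the uncorrelated-input statistical
strength. -/
theorem Suc_UCLOSR_monotone {r s rf sf : ℕ} (hrf : 0 < rf)
    (P : Fin r → Fin r → Fin s → Fin s → ℝ)
    (hP : IsBehavior P) (hPns : NoSignaling P)
    (W : GlobalWiring r s rf sf) (hW : W.IsUCLOSR) :
    Suc (W.apply P) ≤ Suc P := by
  obtain ⟨IA, IB, OA, OB, hIA, hIB, hOA, hOB, hI, hO⟩ := hW
  simp only [Suc]
  refine iSup_le fun DA' => iSup_le fun DB' => iSup_le fun hD' => ?_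
  set DA : Fin s → ℝ := fun x => ∑ χ, DA' χ * IA x χ with hDAdef
  set DB : Fin s → ℝ := fun y => ∑ ψ, DB' ψ * IB y ψ with hDBdef
  have hDA : IsDist DA := by
    constructor
    · exact fun x => Finset.sum_nonneg fun χ _ => mul_nonneg (hD'.1.1 χ) ((hIA χ).1 x)
    · calc ∑ x, DA x = ∑ χ, ∑ x, DA' χ * IA x χ := Finset.sum_comm
        _ = ∑ χ, DA' χ := by
            refine Finset.sum_congr rfl fun χ _ => ?_
            rw [← Finset.mul_sum, (hIA χ).2, mul_one]
        _ = 1 := hD'.1.2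
  have hDB : IsDist DB := by
    constructor
    · exact fun y => Finset.sum_nonneg fun ψ _ => mul_nonneg (hD'.2.1 ψ) ((hIB ψ).1 y)
    · calc ∑ y, DB y = ∑ ψ, ∑ y, DB' ψ * IB y ψ := Finset.sum_comm
        _ = ∑ ψ, DB' ψ := by
            refine Finset.sum_congr rfl fun ψ _ => ?_
            rw [← Finset.mul_sum, (hIB ψ).2, mul_one]
        _ = 1 := hD'.2.2
  refine le_trans ?_ (le_iSup_of_le DA (le_iSup_of_le DB (le_iSup_of_le ⟨hDA, hDB⟩ le_rfl)))
  refine le_iInf fun Q => le_iInf fun hQ => ?_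
  refine le_trans (iInf_le_of_le (W.apply Q) (iInf_le_of_le
    ⟨apply_isBehavior W Q hQ.1,
     apply_isLocal W IA IB OA OB hIA hIB hOA hOB hI hO Q hQ.2⟩ le_rfl)) ?_
  have stepA : ∀ χ ψ, relEnt (outDist (W.apply P) χ ψ) (outDist (W.apply Q) χ ψ) ≤
      ∑ xy : Fin s × Fin s, ENNReal.ofReal (IA xy.1 χ * IB xy.2 ψ) *
        relEnt (outDist P xy.1 xy.2) (outDist Q xy.1 xy.2) := by
    intro χ ψ
    have hform : ∀ R : Fin r → Fin r → Fin s → Fin s → ℝ, outDist (W.apply R) χ ψ =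
        fun z' : Fin rf × Fin rf => ∑ i : Fin s × Fin s, ∑ z : Fin r × Fin r,
          (IA i.1 χ * IB i.2 ψ) * W.O z'.1 z'.2 z.1 z.2 i.1 i.2 χ ψ *
            outDist R i.1 i.2 z := by
      intro R
      funext z'
      show W.apply R z'.1 z'.2 χ ψ = _
      rw [applyEq, Finset.sum_comm]
      refine Finset.sum_congr rfl fun xy _ => Finset.sum_congr rfl fun ab _ => ?_
      rw [hI]
      show _ * R ab.1 ab.2 xy.1 xy.2 * _ = _ * _ * R ab.1 ab.2 xy.1 xy.2
      ring
    rw [hform P, hform Q]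
    have key := gdp (ι := Fin s × Fin s) (Z := Fin r × Fin r) (Z' := Fin rf × Fin rf)
      (fun i => IA i.1 χ * IB i.2 ψ)
      (fun i => mul_nonneg ((hIA χ).1 i.1) ((hIB ψ).1 i.2))
      (fun i z => outDist P i.1 i.2 z) (fun i z => outDist Q i.1 i.2 z)
      (fun i z => hP.1 z.1 z.2 i.1 i.2) (fun i z => hQ.1.1 z.1 z.2 i.1 i.2)
      (fun i z' z => W.O z'.1 z'.2 z.1 z.2 i.1 i.2 χ ψ)
      (fun i z' z => W.O_nonneg _ _ _ _ _ _ _ _)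
      (fun i z => by
        rw [Fintype.sum_prod_type]
        exact W.O_sum z.1 z.2 i.1 i.2 χ ψ)
    exact key
  calc ∑ χ, ∑ ψ, ENNReal.ofReal (DA' χ * DB' ψ) *
        relEnt (outDist (W.apply P) χ ψ) (outDist (W.apply Q) χ ψ)
      ≤ ∑ χ, ∑ ψ, ENNReal.ofReal (DA' χ * DB' ψ) *
          ∑ xy : Fin s × Fin s, ENNReal.ofReal (IA xy.1 χ * IB xy.2 ψ) *
            relEnt (outDist P xy.1 xy.2) (outDist Q xy.1 xy.2) :=
        Finset.sum_le_sum fun χ _ => Finset.sum_le_sum fun ψ _ =>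
          mul_le_mul_right (stepA χ ψ) _
    _ = ∑ χ, ∑ ψ, ∑ xy : Fin s × Fin s,
          ENNReal.ofReal (DA' χ * DB' ψ * (IA xy.1 χ * IB xy.2 ψ)) *
            relEnt (outDist P xy.1 xy.2) (outDist Q xy.1 xy.2) := by
        refine Finset.sum_congr rfl fun χ _ => Finset.sum_congr rfl fun ψ _ => ?_
        rw [Finset.mul_sum]
        refine Finset.sum_congr rfl fun xy _ => ?_
        rw [← mul_assoc, ← ENNReal.ofReal_mul (mul_nonneg (hD'.1.1 χ) (hD'.2.1 ψ))]
    _ = ∑ xy : Fin s × Fin s, ∑ χ, ∑ ψ,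
          ENNReal.ofReal (DA' χ * DB' ψ * (IA xy.1 χ * IB xy.2 ψ)) *
            relEnt (outDist P xy.1 xy.2) (outDist Q xy.1 xy.2) := (sum_comm3 _).symm
    _ = ∑ xy : Fin s × Fin s, ENNReal.ofReal (DA xy.1 * DB xy.2) *
          relEnt (outDist P xy.1 xy.2) (outDist Q xy.1 xy.2) := by
        refine Finset.sum_congr rfl fun xy _ => ?_
        simp only [← Finset.sum_mul]
        congr 1
        have h1 : ∀ χ, (∑ ψ, ENNReal.ofReal (DA' χ * DB' ψ * (IA xy.1 χ * IB xy.2 ψ)))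
            = ENNReal.ofReal (∑ ψ, DA' χ * DB' ψ * (IA xy.1 χ * IB xy.2 ψ)) := by
          intro χ
          refine (ENNReal.ofReal_sum_of_nonneg fun ψ _ => ?_).symm
          exact mul_nonneg (mul_nonneg (hD'.1.1 χ) (hD'.2.1 ψ))
            (mul_nonneg ((hIA χ).1 xy.1) ((hIB ψ).1 xy.2))
        calc ∑ χ, ∑ ψ, ENNReal.ofReal (DA' χ * DB' ψ * (IA xy.1 χ * IB xy.2 ψ))
            = ∑ χ, ENNReal.ofReal (∑ ψ, DA' χ * DB' ψ * (IA xy.1 χ * IB xy.2 ψ)) :=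
              Finset.sum_congr rfl fun χ _ => h1 χ
          _ = ENNReal.ofReal (∑ χ, ∑ ψ, DA' χ * DB' ψ * (IA xy.1 χ * IB xy.2 ψ)) := by
              refine (ENNReal.ofReal_sum_of_nonneg fun χ _ => ?_).symm
              exact Finset.sum_nonneg fun ψ _ =>
                mul_nonneg (mul_nonneg (hD'.1.1 χ) (hD'.2.1 ψ))
                  (mul_nonneg ((hIA χ).1 xy.1) ((hIB ψ).1 xy.2))
          _ = ENNReal.ofReal (DA xy.1 * DB xy.2) := by
              congr 1
              show _ = (∑ χ, DA' χ * IA xy.1 χ) * ∑ ψ, DB' ψ * IB xy.2 ψ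
              rw [Fintype.sum_mul_sum]
              exact Finset.sum_congr rfl fun χ _ => Finset.sum_congr rfl fun ψ _ => by ring
    _ = ∑ x, ∑ y, ENNReal.ofReal (DA x * DB y) *
          relEnt (outDist P x y) (outDist Q x y) := by
        rw [Fintype.sum_prod_type]
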